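/- Let D = [[λ, 1], [0, λ]] with Re(λ) < 0. If Re(λ) > −1/2, then there exists t > 0 with ‖e^{Dt}‖₂ > 1. -/

import Mathlib

open scoped Matrix
open Complex Real

/-- The numerical range of a square complex matrix. -/
def numRange {N : ℕ} (M : Matrix (Fin N) (Fin N) ℂ) : Set ℂ :=
  {z | ∃ x : EuclideanSpace ℂ (Fin N), ‖x‖ = 1 ∧ star (x : Fin N → ℂ) ⬝ᵥ M.mulVec x = z}

/-- The numerical abscissa of a square complex matrix. -/
noncomputable def numAbs {N : ℕ} (M : Matrix (Fin N) (Fin N) ℂ) : ℝ :=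
  sSup {r : ℝ | ∃ x : EuclideanSpace ℂ (Fin N), ‖x‖ = 1 ∧ (star (x : Fin N → ℂ) ⬝ᵥ M.mulVec x).re = r}

/-- The spectral (operator 2-)norm of a square complex matrix. -/
noncomputable def spec2 {N : ℕ} (M : Matrix (Fin N) (Fin N) ℂ) : ℝ :=
  ‖Matrix.toEuclideanCLM (𝕜 := ℂ) M‖

/-- The squared Frobenius norm of a square complex matrix. -/
noncomputable def frobSq {N : ℕ} (M : Matrix (Fin N) (Fin N) ℂ) : ℝ :=
  ∑ i, ∑ j, ‖M i j‖ ^ 2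

lemma exp_of_sq_zero {𝔸 : Type*} [Ring 𝔸] [Algebra ℂ 𝔸] [TopologicalSpace 𝔸]
    [IsTopologicalRing 𝔸] [T2Space 𝔸]
    {x : 𝔸} (h : x ^ 2 = 0) : NormedSpace.exp x = 1 + x := by
  simp only [NormedSpace.exp_eq_tsum ℂ]
  have hz : ∀ n ∉ ({0, 1} : Finset ℕ), (((n.factorial : ℂ))⁻¹ • x ^ n) = 0 := by
    intro n hn
    simp only [Finset.mem_insert, Finset.mem_singleton] at hn
    have h2 : 2 ≤ n := by omega
    have hx : x ^ n = 0 := by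
      calc x ^ n = x ^ 2 * x ^ (n - 2) := by rw [← pow_add]; congr 1; omega
        _ = 0 := by rw [h, zero_mul]
    simp [hx]
  rw [tsum_eq_sum hz]
  simp [Finset.sum_pair]

lemma exp_jordan (lam : ℂ) (t : ℝ) :
    NormedSpace.exp ((t : ℂ) • !![lam, 1; 0, lam])
      = Complex.exp (t * lam) • !![1, (t : ℂ); 0, 1] := by
  have hsq : (!![0, (t:ℂ); 0, 0]) ^ 2 = 0 := by
    ext i j; fin_cases i <;> fin_cases j <;> simp [pow_two, Matrix.mul_apply, Fin.sum_univ_two]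
  have hsplit : (t : ℂ) • !![lam, 1; 0, lam]
      = Matrix.diagonal (fun _ => (t : ℂ) * lam) + !![0, (t:ℂ); 0, 0] := by
    ext i j; fin_cases i <;> fin_cases j <;>
      simp [Matrix.diagonal, mul_comm]
  have hcomm : Commute (Matrix.diagonal (fun _ : Fin 2 => (t : ℂ) * lam)) !![0, (t:ℂ); 0, 0] := by
    show _ = _
    ext i j; fin_cases i <;> fin_cases j <;>
      (simp [Matrix.mul_apply, Fin.sum_univ_two, Matrix.diagonal]; try ring)
  rw [hsplit, Matrix.exp_add_of_commute _ _ hcomm, Matrix.exp_diagonal,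
    exp_of_sq_zero hsq]
  have hpe : NormedSpace.exp (fun _ : Fin 2 => (t : ℂ) * lam)
      = fun _ : Fin 2 => Complex.exp ((t : ℂ) * lam) := by
    ext i; rw [Pi.coe_exp, ← Complex.exp_eq_exp_ℂ]
  rw [hpe]
  ext i j; fin_cases i <;> fin_cases j <;>
    (simp [Matrix.mul_apply, Fin.sum_univ_two, Matrix.diagonal]; try ring)

/-- Transient growth of the matrix exponential of the 2×2 Jordan block [[λ,1],[0,λ]]
when −1/2 < Re(λ) < 0. -/
theorem stmt10 (lam : ℂ) (h1 : lam.re < 0) (h2 : -(1 / 2) < lam.re) :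
    ∃ t : ℝ, 0 < t ∧ 1 < spec2 (NormedSpace.exp ((t : ℂ) • !![lam, 1; 0, lam])) := by
  set a := lam.re with ha
  set t : ℝ := (1 + 2 * a) / 4 with htdef
  have ht : 0 < t := by rw [htdef]; linarith
  have ht1 : t < 1 / 4 := by rw [htdef]; linarith
  refine ⟨t, ht, ?_⟩
  set M : Matrix (Fin 2) (Fin 2) ℂ := NormedSpace.exp ((t : ℂ) • !![lam, 1; 0, lam]) with hM
  set x : EuclideanSpace ℂ (Fin 2) := (WithLp.equiv 2 (Fin 2 → ℂ)).symm ![1, 1] with hx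
  have hxnorm : ‖x‖ = Real.sqrt 2 := by
    rw [EuclideanSpace.norm_eq]
    norm_num [hx, Fin.sum_univ_two]
  have hMx : (Matrix.toEuclideanCLM (𝕜 := ℂ) M) x
      = (WithLp.equiv 2 (Fin 2 → ℂ)).symm (M.mulVec ![1, 1]) := by
    rw [hx]; rfl
  have hmv : M.mulVec ![1, 1] = Complex.exp ((t : ℂ) * lam) • ![1 + (t : ℂ), 1] := by
    rw [hM, exp_jordan]
    ext i; fin_cases i <;>
      simp [Matrix.mulVec, dotProduct, Fin.sum_univ_two] <;> ring
  have hnormMx : ‖(Matrix.toEuclideanCLM (𝕜 := ℂ) M) x‖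
      = Real.exp (t * a) * Real.sqrt ((1 + t) ^ 2 + 1) := by
    rw [hMx, hmv]
    have : ((WithLp.equiv 2 (Fin 2 → ℂ)).symm (Complex.exp ((t : ℂ) * lam) • ![1 + (t : ℂ), 1]))
        = Complex.exp ((t : ℂ) * lam) • ((WithLp.equiv 2 (Fin 2 → ℂ)).symm ![1 + (t : ℂ), 1]) := rfl
    rw [this, norm_smul, Complex.norm_exp, EuclideanSpace.norm_eq]
    have h1t : (0:ℝ) ≤ 1 + t := by linarith
    have : ((t : ℂ) * lam).re = t * a := by simp [ha]
    rw [this]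
    congr 1
    rw [Fin.sum_univ_two]
    norm_num
    rw [show ((1:ℂ) + (t:ℂ)) = ((1 + t : ℝ) : ℂ) by push_cast; ring, Complex.norm_real, Real.norm_eq_abs, _root_.sq_abs]
  -- key real inequality
  have hexp : 2 * t * a + 1 < Real.exp (2 * t * a) :=
    Real.add_one_lt_exp (by nlinarith)
  have hs : (0:ℝ) < (1 + t) ^ 2 + 1 := by positivity
  have h4 : (0:ℝ) < 1 + 2 * t * a := by nlinarith
  have h6 : (0:ℝ) < 9 + 4 * a + 2 * t * a := by nlinarith
  have h7 : 2 * t * (1 + 2 * a) = 8 * t ^ 2 := by rw [htdef]; ring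
  have h5 : 2 ≤ (1 + 2 * t * a) * ((1 + t) ^ 2 + 1) := by
    nlinarith [mul_pos (mul_pos ht ht) h6]
  have hkey : 2 < Real.exp (2 * t * a) * ((1 + t) ^ 2 + 1) := by
    nlinarith [mul_pos (show (0:ℝ) < Real.exp (2*t*a) - (1 + 2*t*a) by linarith) hs]
  have hgt : Real.sqrt 2 < ‖(Matrix.toEuclideanCLM (𝕜 := ℂ) M) x‖ := by
    rw [hnormMx]
    have hE : Real.exp (t * a) = Real.sqrt (Real.exp (2 * t * a)) := by
      rw [show 2 * t * a = t * a + t * a by ring, Real.exp_add,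
        Real.sqrt_mul_self (Real.exp_nonneg _)]
    rw [hE, ← Real.sqrt_mul (Real.exp_nonneg _)]
    exact Real.sqrt_lt_sqrt (by norm_num) (by nlinarith [Real.exp_pos (2*t*a)])
  have hle := (Matrix.toEuclideanCLM (𝕜 := ℂ) M).le_opNorm x
  rw [hxnorm] at hle
  have hs2 : (0:ℝ) < Real.sqrt 2 := by positivity
  show 1 < ‖Matrix.toEuclideanCLM (𝕜 := ℂ) M‖
  rw [← mul_lt_mul_iff_left₀ hs2, one_mul]
  exact lt_of_lt_of_le hgt hle
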